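/- For the measure ν on (0,1] with tail ν[x,1] = x^(−α)(1−x)^θ, where 0 ≤ α < 1 and θ ≥ 0, the Laplace exponent is Φ(ρ) = ∫_0^1 (1−(1−x)^ρ) ν(dx) = ρ B(1−α, ρ+θ) = ρ Γ(1−α) Γ(ρ+θ) / Γ(ρ+1−α+θ). -/

import Mathlib

open MeasureTheory Set

lemma beta_ptwise {a b : ℝ} (x : ℝ) (hx : 0 ≤ x) (hx1 : x ≤ 1) :
    ((x ^ (a-1) * (1-x) ^ (b-1) : ℝ) : ℂ)
      = (x:ℂ) ^ ((a:ℂ)-1) * (1-(x:ℂ)) ^ ((b:ℂ)-1) := by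
  rw [Complex.ofReal_mul, Complex.ofReal_cpow hx, Complex.ofReal_cpow (by linarith : (0:ℝ) ≤ 1-x)]
  push_cast
  ring

lemma realBeta_intble {a b : ℝ} (ha : 0 < a) (hb : 0 < b) :
    IntervalIntegrable (fun x : ℝ => x ^ (a-1) * (1-x) ^ (b-1)) volume 0 1 := by
  have hc := Complex.betaIntegral_convergent (u := (a:ℂ)) (v := (b:ℂ)) (by simpa) (by simpa)
  rw [intervalIntegrable_iff_integrableOn_Ioc_of_le zero_le_one] at hc ⊢
  have h1 : IntegrableOn (fun x : ℝ =>
      ((x:ℂ) ^ ((a:ℂ)-1) * (1-(x:ℂ)) ^ ((b:ℂ)-1)).re) (Ioc 0 1) volume := hc.re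
  refine h1.congr_fun (fun x hx => ?_) measurableSet_Ioc
  dsimp only
  rw [← beta_ptwise x hx.1.le hx.2, Complex.ofReal_re]

lemma realBeta_eq {a b : ℝ} (ha : 0 < a) (hb : 0 < b) :
    ∫ x in (0:ℝ)..1, x ^ (a-1) * (1-x) ^ (b-1)
      = Real.Gamma a * Real.Gamma b / Real.Gamma (a+b) := by
  have h1 := Complex.Gamma_mul_Gamma_eq_betaIntegral (s := (a:ℂ)) (t := (b:ℂ))
    (by simpa) (by simpa)
  have h2 : Complex.betaIntegral (a:ℂ) (b:ℂ)
      = ((∫ x in (0:ℝ)..1, x ^ (a-1) * (1-x) ^ (b-1) : ℝ) : ℂ) := by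
    rw [Complex.betaIntegral, ← intervalIntegral.integral_ofReal]
    refine intervalIntegral.integral_congr fun x hx => ?_
    rw [uIcc_of_le zero_le_one] at hx
    exact (beta_ptwise x hx.1 hx.2).symm
  rw [h2, Complex.Gamma_ofReal, Complex.Gamma_ofReal, show ((a:ℂ)+(b:ℂ)) = ((a+b:ℝ):ℂ) by
    push_cast; ring, Complex.Gamma_ofReal, ← Complex.ofReal_mul, ← Complex.ofReal_mul,
    Complex.ofReal_inj] at h1
  have hab : Real.Gamma (a+b) ≠ 0 := (Real.Gamma_pos_of_pos (by linarith)).ne'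
  field_simp
  linarith [h1]

theorem twoParam_laplaceExponent (α θ ρ : ℝ) (hα0 : 0 ≤ α) (hα1 : α < 1)
    (hθ : 0 ≤ θ) (hρ : 0 < ρ) (ν : Measure ℝ)
    (hsupp : ν ((Set.Ioc (0:ℝ) 1)ᶜ) = 0)
    (hfin : ∀ x : ℝ, 0 < x → ν (Set.Icc x 1) ≠ ⊤)
    (htail : ∀ x : ℝ, 0 < x → x ≤ 1 →
      (ν (Set.Icc x 1)).toReal = x ^ (-α) * (1 - x) ^ θ) :
    ∫ x in Set.Ioc (0:ℝ) 1, (1 - (1 - x) ^ ρ) ∂ν =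
      ρ * Real.Gamma (1 - α) * Real.Gamma (ρ + θ) / Real.Gamma (ρ + 1 - α + θ) := by
  set μ := ν.restrict (Set.Ioc (0:ℝ) 1) with hμ
  set g : ℝ → ℝ := fun t => if t < 1 then ρ * (1-t) ^ (ρ-1) else 0 with hg
  -- basic integrability of the base function
  have hbase : IntervalIntegrable (fun t : ℝ => ρ * (1-t) ^ (ρ-1)) volume 0 1 := by
    have h1 := realBeta_intble (a := 1) (b := ρ) one_pos hρ
    simp only [sub_self, Real.rpow_zero, one_mul] at h1
    exact h1.const_mul ρ
  have hbaseOn : IntegrableOn (fun t : ℝ => ρ * (1-t) ^ (ρ-1)) (Ioc 0 1) volume :=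
    (intervalIntegrable_iff_integrableOn_Ioc_of_le zero_le_one).1 hbase
  have g_eq_ind : g = (Set.Iio (1:ℝ)).indicator (fun t => ρ * (1-t) ^ (ρ-1)) := by
    funext t
    by_cases h : t < 1 <;> simp [hg, Set.indicator, h]
  have g_mble : Measurable g := by
    rw [g_eq_ind]
    have : Measurable (fun t : ℝ => ρ * (1-t) ^ (ρ-1)) := by fun_prop
    exact this.indicator measurableSet_Iio
  have g_nn : ∀ t > (0:ℝ), 0 ≤ g t := by
    intro t _
    by_cases h : t < 1
    · simp only [hg, if_pos h]
      exact mul_nonneg hρ.le (Real.rpow_nonneg (by linarith) _)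
    · simp [hg, h]
  have g_intble : ∀ t > (0:ℝ), IntervalIntegrable g volume 0 t := by
    intro t ht
    rw [intervalIntegrable_iff_integrableOn_Ioc_of_le ht.le, g_eq_ind, IntegrableOn,
      integrable_indicator_iff measurableSet_Iio, IntegrableOn,
      Measure.restrict_restrict measurableSet_Iio]
    exact hbaseOn.mono_set fun s hs => ⟨hs.2.1, hs.1.le⟩
  -- value of the primitive
  have G_eq : ∀ x : ℝ, 0 < x → x ≤ 1 → ∫ t in (0:ℝ)..x, g t = 1 - (1-x) ^ ρ := by
    intro x hx hx1
    have h1 : ∫ t in (0:ℝ)..x, g t = ∫ t in (0:ℝ)..x, ρ * (1-t) ^ (ρ-1) := by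
      apply intervalIntegral.integral_congr_ae
      have hne : ∀ᵐ t : ℝ ∂volume, t ≠ 1 := by
        rw [ae_iff]
        simpa using measure_singleton (1:ℝ)
      filter_upwards [hne] with t htne hmem
      rw [Set.uIoc_of_le hx.le] at hmem
      have : t < 1 := lt_of_le_of_ne (hmem.2.trans hx1) htne
      simp [hg, this]
    rw [h1, intervalIntegral.integral_const_mul,
      intervalIntegral.integral_comp_sub_left (fun u : ℝ => u ^ (ρ-1)) 1,
      integral_rpow (Or.inl (by linarith : (-1:ℝ) < ρ-1))]
    have hρ' : ρ - 1 + 1 = ρ := by ring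
    rw [hρ', sub_zero, Real.one_rpow]
    field_simp
  -- nonnegativity and measurability of the integrand
  have F_mble : AEStronglyMeasurable (fun x : ℝ => 1 - (1-x) ^ ρ) μ := by
    apply Measurable.aestronglyMeasurable
    fun_prop
  have F_nn : 0 ≤ᵐ[μ] fun x : ℝ => 1 - (1-x) ^ ρ := by
    rw [hμ]
    filter_upwards [ae_restrict_mem measurableSet_Ioc] with x hx
    have h1 : (1-x) ^ ρ ≤ 1 := Real.rpow_le_one (by linarith [hx.2]) (by linarith [hx.1]) hρ.le
    simp only [Pi.zero_apply]
    linarith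
  rw [show ∫ x in Set.Ioc (0:ℝ) 1, (1 - (1 - x) ^ ρ) ∂ν
      = ∫ x, (1 - (1 - x) ^ ρ) ∂μ from rfl,
    integral_eq_lintegral_of_nonneg_ae F_nn F_mble]
  -- replace the integrand by the primitive of g
  have hL1 : ∫⁻ x, ENNReal.ofReal (1 - (1-x) ^ ρ) ∂μ
      = ∫⁻ x, ENNReal.ofReal (∫ t in (0:ℝ)..(max x 0), g t) ∂μ := by
    apply lintegral_congr_ae
    rw [hμ]
    refine (ae_restrict_iff' measurableSet_Ioc).2 (Filter.Eventually.of_forall fun x hx => ?_)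
    show ENNReal.ofReal (1 - (1-x) ^ ρ) = ENNReal.ofReal (∫ t in (0:ℝ)..(max x 0), g t)
    rw [max_eq_left hx.1.le, G_eq x hx.1 hx.2]
  rw [hL1]
  -- layer cake
  rw [lintegral_comp_eq_lintegral_meas_le_mul_of_measurable μ
    (fun x => le_max_right x 0) (measurable_id.max measurable_const) g_intble g_mble g_nn]
  -- split the domain
  have hsplit : Ioi (0:ℝ) = Ioo 0 1 ∪ Ici 1 := by
    ext x
    simp only [mem_Ioi, mem_union, mem_Ioo, mem_Ici]
    constructor
    · intro h
      rcases lt_or_ge x 1 with h1 | h1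
      · exact Or.inl ⟨h, h1⟩
      · exact Or.inr h1
    · rintro (⟨h, _⟩ | h)
      · exact h
      · linarith
  rw [hsplit, lintegral_union measurableSet_Ici
    (Set.disjoint_left.mpr fun x hx hx' => absurd hx.2 (not_lt.2 hx'))]
  have hzero : ∫⁻ t in Ici (1:ℝ), μ {a : ℝ | t ≤ max a 0} * ENNReal.ofReal (g t) = 0 := by
    rw [setLIntegral_congr_fun measurableSet_Ici
      (fun t ht => ?_), lintegral_zero]
    have : ¬ t < 1 := not_lt.2 ht
    simp [hg, this]
  rw [hzero, add_zero]
  -- identify the integrand on (0,1)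
  have hmain : ∫⁻ t in Ioo (0:ℝ) 1, μ {a : ℝ | t ≤ max a 0} * ENNReal.ofReal (g t)
      = ∫⁻ t in Ioo (0:ℝ) 1, ENNReal.ofReal (ρ * (t ^ (-α) * (1-t) ^ (ρ+θ-1))) := by
    apply setLIntegral_congr_fun measurableSet_Ioo
    refine fun t (ht : t ∈ Ioo (0:ℝ) 1) => show _ = _ from ?_
    dsimp only
    have ht0 := ht.1
    have ht1 := ht.2
    have h1 : {a : ℝ | t ≤ max a 0} = Ici t := by
      ext a
      simp only [mem_setOf_eq, le_max_iff, mem_Ici]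
      exact or_iff_left (by linarith)
    have h2 : Ici t ∩ Set.Ioc (0:ℝ) 1 = Set.Icc t 1 := by
      ext a
      simp only [mem_inter_iff, mem_Ici, mem_Ioc, mem_Icc]
      constructor
      · rintro ⟨h, _, h'⟩; exact ⟨h, h'⟩
      · rintro ⟨h, h'⟩; exact ⟨h, by linarith, h'⟩
    rw [h1, hμ, Measure.restrict_apply measurableSet_Ici, h2]
    have h3 : ν (Set.Icc t 1) = ENNReal.ofReal (t ^ (-α) * (1-t) ^ θ) := by
      rw [← htail t ht0 ht1.le, ENNReal.ofReal_toReal (hfin t ht0)]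
    have h4 : g t = ρ * (1-t) ^ (ρ-1) := if_pos ht1
    rw [h3, h4, ← ENNReal.ofReal_mul (mul_nonneg (Real.rpow_nonneg ht0.le _)
      (Real.rpow_nonneg (by linarith) _))]
    congr 1
    have h5 : (1-t) ^ θ * (1-t) ^ (ρ-1) = (1-t) ^ (ρ+θ-1) := by
      rw [← Real.rpow_add (by linarith : (0:ℝ) < 1-t)]
      congr 1
      ring
    calc t ^ (-α) * (1-t) ^ θ * (ρ * (1-t) ^ (ρ-1))
        = ρ * (t ^ (-α) * ((1-t) ^ θ * (1-t) ^ (ρ-1))) := by ring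
      _ = ρ * (t ^ (-α) * (1-t) ^ (ρ+θ-1)) := by rw [h5]
  rw [hmain]
  -- integrability of the beta integrand
  have hbetaint : IntegrableOn (fun t : ℝ => t ^ (-α) * (1-t) ^ (ρ+θ-1)) (Ioc 0 1) volume := by
    have h1 := (intervalIntegrable_iff_integrableOn_Ioc_of_le zero_le_one).1
      (realBeta_intble (a := 1-α) (b := ρ+θ) (by linarith) (by linarith))
    simpa [show (1-α)-1 = -α from by ring] using h1
  have h_int : IntegrableOn (fun t : ℝ => ρ * (t ^ (-α) * (1-t) ^ (ρ+θ-1))) (Ioo 0 1) volume := by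
    have h' : IntegrableOn (fun t : ℝ => ρ * (t ^ (-α) * (1-t) ^ (ρ+θ-1))) (Ioc 0 1) volume :=
      hbetaint.const_mul ρ
    exact h'.mono_set Ioo_subset_Ioc_self
  have h_nn : 0 ≤ᵐ[volume.restrict (Ioo (0:ℝ) 1)]
      fun t : ℝ => ρ * (t ^ (-α) * (1-t) ^ (ρ+θ-1)) := by
    filter_upwards [ae_restrict_mem measurableSet_Ioo] with t ht
    exact mul_nonneg hρ.le (mul_nonneg (Real.rpow_nonneg ht.1.le _)
      (Real.rpow_nonneg (by linarith [ht.2]) _))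
  rw [← ofReal_integral_eq_lintegral_ofReal h_int h_nn]
  -- compute the beta integral
  have hval : ∫ t in Ioo (0:ℝ) 1, ρ * (t ^ (-α) * (1-t) ^ (ρ+θ-1))
      = ρ * (Real.Gamma (1-α) * Real.Gamma (ρ+θ) / Real.Gamma ((1-α) + (ρ+θ))) := by
    rw [MeasureTheory.integral_const_mul]
    congr 1
    rw [← MeasureTheory.integral_Ioc_eq_integral_Ioo,
      ← intervalIntegral.integral_of_le zero_le_one]
    have h1 := realBeta_eq (a := 1-α) (b := ρ+θ) (by linarith) (by linarith)
    simpa [show (1-α)-1 = -α from by ring] using h1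
  rw [hval]
  have hpos : 0 < Real.Gamma (1-α) * Real.Gamma (ρ+θ) / Real.Gamma ((1-α) + (ρ+θ)) := by
    apply div_pos (mul_pos (Real.Gamma_pos_of_pos (by linarith))
      (Real.Gamma_pos_of_pos (by linarith))) (Real.Gamma_pos_of_pos (by linarith))
  rw [ENNReal.toReal_ofReal (by positivity)]
  rw [show (1-α) + (ρ+θ) = ρ + 1 - α + θ from by ring]
  ring
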